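/- Let f be a homeomorphism of a compact metric space (X,d) and let n be a positive integer. If f is positively n-expansive, topologically transitive, and has the shadowing property, then there exists a finite subset A ⊆ X such that X = ⋃_{x∈A} W^u(x), i.e. every point of X belongs to the unstable set of some point of A. -/

import Mathlib

open Metric Filter Set

variable {X : Type*} [MetricSpace X]

/-- The iterate of a homeomorphism by an integer power. -/
def hIter (f : X ≃ₜ X) (k : ℤ) (x : X) : X := (f.toEquiv ^ k) x

/-- The local stable set of `x` of size `c`:
points whose forward iterates stay `c`-close to those of `x`. -/
def localStable (f : X ≃ₜ X) (c : ℝ) (x : X) : Set X :=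
  {y | ∀ k : ℕ, dist ((⇑f)^[k] y) ((⇑f)^[k] x) ≤ c}

/-- The local unstable set of `x` of size `c`:
points whose backward iterates stay `c`-close to those of `x`. -/
def localUnstable (f : X ≃ₜ X) (c : ℝ) (x : X) : Set X :=
  {y | ∀ k : ℕ, dist ((⇑f.symm)^[k] y) ((⇑f.symm)^[k] x) ≤ c}

/-- The stable set of `x`. -/
def stableSet (f : X ≃ₜ X) (x : X) : Set X :=
  {y | Tendsto (fun k : ℕ => dist ((⇑f)^[k] y) ((⇑f)^[k] x)) atTop (nhds 0)}

/-- The unstable set of `x`. -/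
def unstableSet (f : X ≃ₜ X) (x : X) : Set X :=
  {y | Tendsto (fun k : ℕ => dist ((⇑f.symm)^[k] y) ((⇑f.symm)^[k] x)) atTop (nhds 0)}

/-- `f` is positively `n`-expansive: for some `c > 0` every local stable set of
size `c` contains at most `n` points. -/
def PosNExpansive (f : X ≃ₜ X) (n : ℕ) : Prop :=
  ∃ c > 0, ∀ x : X, ∀ S : Finset X, ↑S ⊆ localStable f c x → S.card ≤ n

/-- `f` is `n`-expansive: for some `c > 0` every dynamical ball of size `c`
contains at most `n` points. -/
def NExpansive (f : X ≃ₜ X) (n : ℕ) : Prop :=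
  ∃ c > 0, ∀ x : X, ∀ S : Finset X,
    ↑S ⊆ localStable f c x ∩ localUnstable f c x → S.card ≤ n

/-- `f` is expansive. -/
def Expansive (f : X ≃ₜ X) : Prop :=
  ∃ c > 0, ∀ x y : X, (∀ k : ℤ, dist (hIter f k x) (hIter f k y) ≤ c) → x = y

/-- `(x_k)_{k ∈ ℤ}` is a `δ`-pseudo-orbit. -/
def IsPseudoOrbit (f : X ≃ₜ X) (δ : ℝ) (x : ℤ → X) : Prop :=
  ∀ k : ℤ, dist (f (x k)) (x (k + 1)) < δ

/-- `(x_k)_{k ∈ ℤ}` is a two-sided limit pseudo-orbit: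
`d(f(x_k), x_{k+1}) → 0` as `|k| → ∞`. -/
def IsTwoSidedLimitPseudoOrbit (f : X ≃ₜ X) (x : ℤ → X) : Prop :=
  Tendsto (fun k : ℤ => dist (f (x k)) (x (k + 1))) cofinite (nhds 0)

/-- `z` `ε`-shadows the sequence `(x_k)_{k ∈ ℤ}`. -/
def Shadows (f : X ≃ₜ X) (ε : ℝ) (z : X) (x : ℤ → X) : Prop :=
  ∀ k : ℤ, dist (hIter f k z) (x k) < ε

/-- `z` two-sided limit shadows `(x_k)_{k ∈ ℤ}`. -/
def TwoSidedLimitShadows (f : X ≃ₜ X) (z : X) (x : ℤ → X) : Prop :=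
  Tendsto (fun k : ℤ => dist (hIter f k z) (x k)) cofinite (nhds 0)

/-- The shadowing property. -/
def ShadowingProperty (f : X ≃ₜ X) : Prop :=
  ∀ ε > 0, ∃ δ > 0, ∀ x : ℤ → X, IsPseudoOrbit f δ x → ∃ z : X, Shadows f ε z x

/-- The L-shadowing property. -/
def LShadowingProperty (f : X ≃ₜ X) : Prop :=
  ∀ ε > 0, ∃ δ > 0, ∀ x : ℤ → X, IsPseudoOrbit f δ x →
    IsTwoSidedLimitPseudoOrbit f x →
    ∃ z : X, Shadows f ε z x ∧ TwoSidedLimitShadows f z x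

/-- Topological transitivity. -/
def TopTransitive (f : X ≃ₜ X) : Prop :=
  ∀ U V : Set X, IsOpen U → IsOpen V → U.Nonempty → V.Nonempty →
    ∃ k : ℕ, ((⇑f)^[k] '' U ∩ V).Nonempty

/-- There is a nontrivial finite `ε`-pseudo-orbit from `x` to `y`. -/
def ChainFrom (f : X ≃ₜ X) (ε : ℝ) (x y : X) : Prop :=
  ∃ (l : ℕ) (c : ℕ → X), 0 < l ∧ c 0 = x ∧ c l = y ∧
    ∀ k < l, dist (f (c k)) (c (k + 1)) < ε

/-- `x` is a chain recurrent point of `f`. -/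
def ChainRecurrent (f : X ≃ₜ X) (x : X) : Prop :=
  ∀ ε > 0, ChainFrom f ε x x

/-- The chain recurrent class of `x`. -/
def chainClass (f : X ≃ₜ X) (x : X) : Set X :=
  {y | ∀ ε > 0, ChainFrom f ε x y ∧ ChainFrom f ε y x}

/-- `x` is a periodic point of `f`. -/
def Periodic (f : X ≃ₜ X) (x : X) : Prop :=
  ∃ k : ℕ, 1 ≤ k ∧ (⇑f)^[k] x = x

/-- `x` is a non-wandering point of `f`. -/
def NonWandering (f : X ≃ₜ X) (x : X) : Prop :=
  ∀ U : Set X, IsOpen U → x ∈ U → ∃ k : ℕ, 0 < k ∧ ((⇑f)^[k] '' U ∩ U).Nonempty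

/-- The omega limit set of `x`: accumulation points of the forward orbit. -/
def omegaLimitSet (f : X ≃ₜ X) (x : X) : Set X :=
  {y | ∃ φ : ℕ → ℕ, StrictMono φ ∧ Tendsto (fun n => (⇑f)^[φ n] x) atTop (nhds y)}

/-- `z` two-sided limit shadows `(x_k)` with gap `K`. -/
def TwoSidedLimitShadowsWithGap (f : X ≃ₜ X) (K : ℤ) (z : X) (x : ℤ → X) : Prop :=
  Tendsto (fun k : ℤ => dist (hIter f k z) (x k)) atBot (nhds 0) ∧
  Tendsto (fun k : ℤ => dist (hIter f (K + k) z) (x k)) atTop (nhds 0)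


section Aux

variable (f : X ≃ₜ X)

lemma hIter_zero (x : X) : hIter f 0 x = x := by simp [hIter]

lemma hIter_add (s t : ℤ) (x : X) : hIter f (s + t) x = hIter f s (hIter f t x) := by
  simp [hIter, zpow_add, Equiv.Perm.mul_apply]

lemma hIter_one (x : X) : hIter f 1 x = f x := by simp [hIter]

lemma f_hIter (t : ℤ) (x : X) : f (hIter f t x) = hIter f (t + 1) x := by
  rw [add_comm, hIter_add, hIter_one]

lemma hIter_natCast (k : ℕ) (x : X) : hIter f (k : ℤ) x = (⇑f)^[k] x := by
  induction k generalizing x with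
  | zero => simpa using hIter_zero f x
  | succ m ih =>
    have h : ((m + 1 : ℕ) : ℤ) = (m : ℤ) + 1 := by push_cast; ring
    rw [h, hIter_add, hIter_one, Function.iterate_succ_apply]
    exact ih (f x)

lemma hIter_mul_fixed {p : X} {a : ℕ} (ha : (⇑f)^[a] p = p) (s : ℤ) :
    hIter f ((a : ℤ) * s) p = p := by
  induction s using Int.induction_on with
  | zero => simpa using hIter_zero f p
  | succ k ih =>
    have h : (a : ℤ) * ((k : ℤ) + 1) = (a : ℤ) + (a : ℤ) * k := by ring
    rw [h, hIter_add, ih, hIter_natCast, ha]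
  | pred k ih =>
    have hinj : Function.Injective ((⇑f)^[a]) := (Homeomorph.injective f).iterate a
    apply hinj
    have h2 : (⇑f)^[a] (hIter f ((a : ℤ) * (-(k : ℤ) - 1)) p) = p := by
      rw [← hIter_natCast f a, ← hIter_add]
      have h3 : (a : ℤ) + (a : ℤ) * (-(k : ℤ) - 1) = (a : ℤ) * (-(k : ℤ)) := by ring
      rw [h3, ih]
    rw [h2, ha]

lemma hIter_eq_of_dvd {q : X} {b : ℕ} (hb : (⇑f)^[b] q = q) {t t' : ℤ}
    (h : (b : ℤ) ∣ (t - t')) : hIter f t q = hIter f t' q := by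
  obtain ⟨s, hs⟩ := h
  have ht : t = t' + (b : ℤ) * s := by linarith
  rw [ht, hIter_add, hIter_mul_fixed f hb]

lemma hIter_emod {p : X} {a : ℕ} (ha0 : 0 < a) (ha : (⇑f)^[a] p = p) (t : ℤ) :
    hIter f t p = (⇑f)^[(t % (a : ℤ)).toNat] p := by
  have hnn : 0 ≤ t % (a : ℤ) := Int.emod_nonneg t (by exact_mod_cast ha0.ne')
  have key : t = t % (a : ℤ) + (a : ℤ) * (t / (a : ℤ)) := by
    have := Int.mul_ediv_add_emod t (a : ℤ); linarith
  calc hIter f t p = hIter f (t % (a : ℤ) + (a : ℤ) * (t / (a : ℤ))) p := by rw [← key]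
    _ = hIter f (t % (a : ℤ)) (hIter f ((a : ℤ) * (t / (a : ℤ))) p) := hIter_add ..
    _ = hIter f (t % (a : ℤ)) p := by rw [hIter_mul_fixed f ha]
    _ = (⇑f)^[(t % (a : ℤ)).toNat] p := by
        rw [← hIter_natCast, Int.toNat_of_nonneg hnn]

lemma iterate_mod {p : X} {a : ℕ} (ha0 : 0 < a) (ha : (⇑f)^[a] p = p) (t : ℕ) :
    (⇑f)^[t] p = (⇑f)^[t % a] p := by
  conv_lhs => rw [← Nat.mod_add_div t a]
  rw [Function.iterate_add_apply, Function.iterate_mul, Function.iterate_fixed ha (t / a)]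

lemma iterate_mem_orbit [DecidableEq X] {p : X} {a : ℕ} (ha0 : 0 < a) (ha : (⇑f)^[a] p = p) (t : ℕ) :
    (⇑f)^[t] p ∈ (Finset.range a).image (fun j => (⇑f)^[j] p) := by
  rw [iterate_mod f ha0 ha t]
  exact Finset.mem_image.mpr ⟨t % a, Finset.mem_range.mpr (Nat.mod_lt t ha0), rfl⟩

lemma hIter_mem_orbit [DecidableEq X] {p : X} {a : ℕ} (ha0 : 0 < a) (ha : (⇑f)^[a] p = p) (t : ℤ) :
    hIter f t p ∈ (Finset.range a).image (fun j => (⇑f)^[j] p) := by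
  rw [hIter_emod f ha0 ha t]
  refine Finset.mem_image.mpr ⟨(t % (a : ℤ)).toNat, Finset.mem_range.mpr ?_, rfl⟩
  have h2 : t % (a : ℤ) < (a : ℤ) := Int.emod_lt_of_pos t (by exact_mod_cast ha0)
  have hnn : 0 ≤ t % (a : ℤ) := Int.emod_nonneg t (by exact_mod_cast ha0.ne')
  omega

end Aux

/-- From a `k`-cycle pseudo-orbit, shadowing plus positive n-expansiveness produce
a genuine periodic point `ε`-close to `u`. -/
lemma periodic_of_cycle [DecidableEq X] (f : X ≃ₜ X) {n : ℕ} {c : ℝ}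
    (hC : ∀ x : X, ∀ S : Finset X, ↑S ⊆ localStable f c x → S.card ≤ n)
    {ε δ : ℝ} (hε : 0 < ε) (hεc : 2 * ε ≤ c)
    (H : ∀ x : ℤ → X, IsPseudoOrbit f δ x → ∃ z : X, Shadows f ε z x)
    (hδ : 0 < δ) (u : X) (k : ℕ) (hk : 0 < k)
    (hclose : dist ((⇑f)^[k] u) u < δ) :
    ∃ (z : X) (T : ℕ), 1 ≤ T ∧ (⇑f)^[T] z = z ∧ dist z u < ε := by
  have hkz : ((k : ℤ)) ≠ 0 := by exact_mod_cast hk.ne'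
  set γ : ℤ → X := fun t => (⇑f)^[(t % (k : ℤ)).toNat] u with hγdef
  have hγper : ∀ (t : ℤ) (j : ℕ), γ (t + (j * k : ℕ)) = γ t := by
    intro t j
    have h : (t + ((j * k : ℕ) : ℤ)) % (k : ℤ) = t % (k : ℤ) := by
      push_cast
      rw [mul_comm (j : ℤ) (k : ℤ)]
      exact Int.add_mul_emod_self_left t (k : ℤ) (j : ℤ)
    simp only [hγdef, h]
  have hγPO : IsPseudoOrbit f δ γ := by
    intro t
    have hnn : 0 ≤ t % (k : ℤ) := Int.emod_nonneg t hkz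
    have hlt : t % (k : ℤ) < (k : ℤ) := Int.emod_lt_of_pos t (by exact_mod_cast hk)
    set j := (t % (k : ℤ)).toNat with hjdef
    have hjv : (j : ℤ) = t % (k : ℤ) := Int.toNat_of_nonneg hnn
    have hjk : j < k := by omega
    have ht : t = (k : ℤ) * (t / (k : ℤ)) + (j : ℤ) := by
      rw [hjv]; exact (Int.mul_ediv_add_emod t _).symm
    have hγt : γ t = (⇑f)^[j] u := rfl
    rcases Nat.lt_or_ge (j + 1) k with hlt2 | hge
    · have h1 : (t + 1) % (k : ℤ) = ((j : ℤ) + 1) := by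
        have e : t + 1 = ((j : ℤ) + 1) + (k : ℤ) * (t / (k : ℤ)) := by linarith
        rw [e, Int.add_mul_emod_self_left, Int.emod_eq_of_lt (by positivity)
          (by exact_mod_cast hlt2)]
      have hγt1 : γ (t + 1) = (⇑f)^[j + 1] u := by
        simp only [hγdef, h1]
        norm_num
      rw [hγt, hγt1, Function.iterate_succ_apply', dist_self]
      exact hδ
    · have hjk1 : j + 1 = k := by omega
      have h1 : (t + 1) % (k : ℤ) = 0 := by
        have hc : (j : ℤ) + 1 = (k : ℤ) := by exact_mod_cast hjk1
        have e : t + 1 = (k : ℤ) * (t / (k : ℤ) + 1) := by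
          rw [mul_add, mul_one]; linarith
        rw [e]; exact Int.mul_emod_right _ _
      have hγt1 : γ (t + 1) = u := by simp only [hγdef, h1]; simp
      have e3 : f ((⇑f)^[j] u) = (⇑f)^[j + 1] u := (Function.iterate_succ_apply' (⇑f) j u).symm
      rw [hγt, hγt1, e3, hjk1]
      exact hclose
  obtain ⟨z, hz⟩ := H γ hγPO
  have hmem : ∀ j : ℕ, (⇑f)^[j * k] z ∈ localStable f c z := by
    intro j m
    have A := hz ((m + j * k : ℕ) : ℤ)
    rw [hIter_natCast] at A
    have B : γ ((m + j * k : ℕ) : ℤ) = γ (m : ℤ) := by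
      have e : ((m + j * k : ℕ) : ℤ) = (m : ℤ) + ((j * k : ℕ) : ℤ) := by push_cast; ring
      rw [e, hγper]
    have Cm := hz (m : ℤ)
    rw [hIter_natCast] at Cm
    rw [B] at A
    have e2 : (⇑f)^[m] ((⇑f)^[j * k] z) = (⇑f)^[m + j * k] z :=
      (Function.iterate_add_apply _ m (j * k) z).symm
    rw [e2]
    calc dist ((⇑f)^[m + j * k] z) ((⇑f)^[m] z)
        ≤ dist ((⇑f)^[m + j * k] z) (γ (m : ℤ)) + dist ((⇑f)^[m] z) (γ (m : ℤ)) :=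
          dist_triangle_right _ _ _
      _ ≤ c := by linarith
  set S : Finset X := (Finset.range (n + 1)).image (fun j => (⇑f)^[j * k] z) with hSdef
  have hsub : ↑S ⊆ localStable f c z := by
    intro x hx
    rw [Finset.mem_coe, hSdef, Finset.mem_image] at hx
    obtain ⟨j, _, rfl⟩ := hx
    exact hmem j
  have hcard := hC z S hsub
  have hninj : ¬ Set.InjOn (fun j => (⇑f)^[j * k] z) ↑(Finset.range (n + 1)) := by
    intro hinj
    rw [hSdef, Finset.card_image_of_injOn hinj, Finset.card_range] at hcard
    omega
  rw [Set.InjOn] at hninj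
  push_neg at hninj
  obtain ⟨j₁, hj₁, j₂, hj₂, heq, hne⟩ := hninj
  have key : ∀ α β : ℕ, α < β → (⇑f)^[α * k] z = (⇑f)^[β * k] z →
      ∃ T : ℕ, 1 ≤ T ∧ (⇑f)^[T] z = z := by
    intro α β hab he
    have e : β * k = α * k + (β - α) * k := by
      have h : α * k ≤ β * k := Nat.mul_le_mul_right k hab.le
      rw [Nat.sub_mul]; omega
    rw [e, Function.iterate_add_apply] at he
    have hinj : Function.Injective ((⇑f)^[α * k]) := (Homeomorph.injective f).iterate _
    refine ⟨(β - α) * k, ?_, (hinj he).symm⟩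
    have : 1 ≤ β - α := by omega
    calc 1 ≤ 1 * 1 := by norm_num
      _ ≤ (β - α) * k := Nat.mul_le_mul this hk
  have hdzu : dist z u < ε := by
    have := hz 0
    rw [hIter_zero] at this
    have hγ0 : γ 0 = u := by simp [hγdef]
    rwa [hγ0] at this
  rcases Nat.lt_or_ge j₁ j₂ with h | h
  · obtain ⟨T, hT1, hT2⟩ := key j₁ j₂ h heq
    exact ⟨z, T, hT1, hT2, hdzu⟩
  · have h' : j₂ < j₁ := by omega
    obtain ⟨T, hT1, hT2⟩ := key j₂ j₁ h' heq.symm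
    exact ⟨z, T, hT1, hT2, hdzu⟩

/-- Near any non-isolated point there is a periodic point. -/
lemma exists_periodic_near [DecidableEq X] (f : X ≃ₜ X) {n : ℕ} {c : ℝ}
    (hC : ∀ x : X, ∀ S : Finset X, ↑S ⊆ localStable f c x → S.card ≤ n)
    (htrans : TopTransitive f) (hshad : ShadowingProperty f)
    (y : X) (hy : ∀ ρ > 0, ∃ y' : X, y' ≠ y ∧ dist y' y < ρ)
    {ε : ℝ} (hε : 0 < ε) (hεc : 2 * ε ≤ c) :
    ∃ (z : X) (T : ℕ), 1 ≤ T ∧ (⇑f)^[T] z = z ∧ dist z y < 2 * ε := by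
  obtain ⟨δ₀, hδ₀, H⟩ := hshad ε hε
  set δ := min δ₀ ε with hδdef
  have hδ : 0 < δ := lt_min hδ₀ hε
  obtain ⟨y'', hy''ne, hy''d⟩ := hy (δ / 4) (by positivity)
  set r₀ := dist y'' y with hr₀def
  have hr₀ : 0 < r₀ := dist_pos.mpr hy''ne
  have hr₀lt : r₀ < δ / 4 := hy''d
  obtain ⟨k, w, hw⟩ := htrans (ball y'' (r₀ / 2)) (ball y (r₀ / 2)) isOpen_ball isOpen_ball
    ⟨y'', mem_ball_self (by positivity)⟩ ⟨y, mem_ball_self (by positivity)⟩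
  obtain ⟨⟨u, hu, huw⟩, hwV⟩ := hw
  rw [mem_ball] at hu hwV
  have hk : 0 < k := by
    rcases Nat.eq_zero_or_pos k with h0 | h
    · exfalso
      subst h0
      simp only [Function.iterate_zero, id_eq] at huw
      subst huw
      have h1 : dist y'' y ≤ dist y'' u + dist u y := dist_triangle _ _ _
      rw [dist_comm y'' u] at h1
      linarith
    · exact h
  have hclose : dist ((⇑f)^[k] u) u < δ := by
    rw [huw]
    have h1 : dist w u ≤ dist w y + dist y y'' + dist y'' u := dist_triangle4 _ _ _ _
    rw [dist_comm y y'', dist_comm y'' u] at h1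
    linarith
  have Hδ : ∀ x : ℤ → X, IsPseudoOrbit f δ x → ∃ z : X, Shadows f ε z x := by
    intro x hx
    exact H x (fun t => lt_of_lt_of_le (hx t) (min_le_left _ _))
  obtain ⟨z, T, hT1, hT2, hdz⟩ := periodic_of_cycle f hC hε hεc Hδ hδ u k hk hclose
  refine ⟨z, T, hT1, hT2, ?_⟩
  have h1 : dist z y ≤ dist z u + dist u y'' + dist y'' y := dist_triangle4 _ _ _ _
  have hdu : dist u y'' < r₀ / 2 := hu
  have hδε : δ ≤ ε := min_le_right _ _
  linarith


theorem stmt11 {X : Type*} [MetricSpace X] [CompactSpace X] (f : X ≃ₜ X) (n : ℕ)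
    (hn : 0 < n) (hexp : PosNExpansive f n) (htrans : TopTransitive f)
    (hshad : ShadowingProperty f) :
    ∃ A : Finset X, ∀ y : X, ∃ a ∈ A, y ∈ unstableSet f a := by
  classical
  by_cases hfin : (Set.univ : Set X).Finite
  · refine ⟨hfin.toFinset, fun y => ⟨y, by simp, ?_⟩⟩
    show Tendsto (fun k : ℕ => dist ((⇑f.symm)^[k] y) ((⇑f.symm)^[k] y)) atTop (nhds 0)
    simp only [dist_self]
    exact tendsto_const_nhds
  · exfalso
    obtain ⟨c, hc, hC⟩ := hexp
    have hnemp : Nonempty X := by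
      by_contra h
      rw [not_nonempty_iff] at h
      exact hfin (by rw [Set.univ_eq_empty_iff.mpr h]; exact Set.finite_empty)
    -- Step 1: every point is non-isolated
    have hiso : ∀ y : X, ∀ ρ > 0, ∃ y' : X, y' ≠ y ∧ dist y' y < ρ := by
      intro y ρ hρ
      by_contra hcon
      push_neg at hcon
      have hball : ball y ρ = {y} := by
        apply subset_antisymm
        · intro w hw
          rw [mem_ball] at hw
          by_contra hwne
          exact absurd hw (not_lt.mpr (hcon w hwne))
        · intro w hw
          rw [Set.mem_singleton_iff] at hw
          subst hw
          exact mem_ball_self hρ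
      have hopen : IsOpen ({y} : Set X) := hball ▸ isOpen_ball
      have hofy : IsOpen ({f y} : Set X) := by
        have h2 := f.isOpenMap _ hopen
        rwa [Set.image_singleton] at h2
      obtain ⟨k, w, hw⟩ := htrans {f y} {y} hofy hopen ⟨f y, rfl⟩ ⟨y, rfl⟩
      obtain ⟨⟨u, hu, huw⟩, hwy⟩ := hw
      rw [Set.mem_singleton_iff] at hu hwy
      subst hu
      rw [hwy] at huw
      have hper : (⇑f)^[k + 1] y = y := by
        rw [Function.iterate_succ_apply]; exact huw
      have ha0 : 0 < k + 1 := Nat.succ_pos k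
      set Op := (Finset.range (k + 1)).image (fun j => (⇑f)^[j] y) with hOp
      have huniv : (Set.univ : Set X) ⊆ ↑Op := by
        intro x _
        by_contra hx
        have hOpne : Op.Nonempty :=
          ⟨y, Finset.mem_image.mpr ⟨0, Finset.mem_range.mpr ha0, rfl⟩⟩
        set r₁ := ((Op.image (fun o => dist x o)).min' (hOpne.image _)) with hr₁def
        have hr₁pos : 0 < r₁ := by
          rw [Finset.lt_min'_iff]
          intro d hd
          rw [Finset.mem_image] at hd
          obtain ⟨o, ho, rfl⟩ := hd
          have hne2 : o ≠ x := by rintro rfl; exact hx (Finset.mem_coe.mpr ho)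
          exact dist_pos.mpr hne2.symm
        obtain ⟨k', w', hw'⟩ := htrans {y} (ball x r₁) hopen isOpen_ball ⟨y, rfl⟩
          ⟨x, mem_ball_self hr₁pos⟩
        obtain ⟨⟨u', hu', huw'⟩, hw'V⟩ := hw'
        rw [Set.mem_singleton_iff] at hu'
        subst hu'
        have hmem : (⇑f)^[k'] u' ∈ Op := iterate_mem_orbit f ha0 hper k'
        have hle : r₁ ≤ dist x ((⇑f)^[k'] u') :=
          Finset.min'_le _ _ (Finset.mem_image_of_mem _ hmem)
        rw [← huw', mem_ball, dist_comm] at hw'V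
        linarith
      exact hfin (Set.Finite.subset (Finset.finite_toSet Op) huniv)
    -- Step 2: two periodic points with disjoint orbits
    obtain ⟨y₀⟩ := hnemp
    obtain ⟨p, a, ha1, hpa, _⟩ := exists_periodic_near f hC htrans hshad y₀ (hiso y₀)
      (ε := c / 4) (by positivity) (by linarith)
    have ha0 : 0 < a := ha1
    set Op := (Finset.range a).image (fun j => (⇑f)^[j] p) with hOpdef
    have hOpne : Op.Nonempty := ⟨p, Finset.mem_image.mpr ⟨0, Finset.mem_range.mpr ha0, rfl⟩⟩
    obtain ⟨y₁, hy₁⟩ : ∃ y₁ : X, y₁ ∉ (↑Op : Set X) := by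
      by_contra hcon
      push_neg at hcon
      exact hfin (Set.Finite.subset (Finset.finite_toSet Op) (fun x _ => hcon x))
    set r := ((Op.image (fun o => dist y₁ o)).min' (hOpne.image _)) with hrdef
    have hr : 0 < r := by
      rw [Finset.lt_min'_iff]
      intro d hd
      rw [Finset.mem_image] at hd
      obtain ⟨o, ho, rfl⟩ := hd
      have hne2 : o ≠ y₁ := by rintro rfl; exact hy₁ (Finset.mem_coe.mpr ho)
      exact dist_pos.mpr hne2.symm
    have hεq : 0 < min (c / 4) (r / 2) := lt_min (by positivity) (by positivity)
    obtain ⟨q, b, hb1, hqb, hqd⟩ := exists_periodic_near f hC htrans hshad y₁ (hiso y₁)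
      (ε := min (c / 4) (r / 2)) hεq (by
        have h5 := min_le_left (c / 4) (r / 2); linarith)
    have hb0 : 0 < b := hb1
    have hqOp : q ∉ Op := by
      intro hmem
      have hle : r ≤ dist y₁ q := Finset.min'_le _ _ (Finset.mem_image_of_mem _ hmem)
      have h5 := min_le_right (c / 4) (r / 2)
      rw [dist_comm] at hle
      linarith
    set Oq := (Finset.range b).image (fun j => (⇑f)^[j] q) with hOqdef
    have hOqne : Oq.Nonempty := ⟨q, Finset.mem_image.mpr ⟨0, Finset.mem_range.mpr hb0, rfl⟩⟩
    have hdisj : ∀ o ∈ Op, ∀ o' ∈ Oq, o ≠ o' := by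
      intro o ho o' ho' heq
      rw [hOpdef, Finset.mem_image] at ho
      rw [hOqdef, Finset.mem_image] at ho'
      obtain ⟨i₀, hi₀, rfl⟩ := ho
      obtain ⟨j₀, hj₀, rfl⟩ := ho'
      rw [Finset.mem_range] at hi₀ hj₀
      have hq2 : q = (⇑f)^[(b - j₀) + i₀] p := by
        have h1 : q = (⇑f)^[b - j₀] ((⇑f)^[j₀] q) := by
          rw [← Function.iterate_add_apply]
          have e : b - j₀ + j₀ = b := by omega
          rw [e, hqb]
        rw [h1, ← heq, ← Function.iterate_add_apply]
      have hmem2 : q ∈ Op := by rw [hq2, hOpdef]; exact iterate_mem_orbit f ha0 hpa _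
      exact hqOp hmem2
    -- Step 3: separation between the two orbits
    set s := (((Op ×ˢ Oq).image (fun pr => dist pr.1 pr.2)).min'
      ((hOpne.product hOqne).image _)) with hsdef
    have hs : 0 < s := by
      rw [Finset.lt_min'_iff]
      intro d hd
      rw [Finset.mem_image] at hd
      obtain ⟨pr, hpr, rfl⟩ := hd
      rw [Finset.mem_product] at hpr
      exact dist_pos.mpr (hdisj _ hpr.1 _ hpr.2)
    have hsle : ∀ o ∈ Op, ∀ o' ∈ Oq, s ≤ dist o o' := by
      intro o ho o' ho'
      exact Finset.min'_le _ _
        (Finset.mem_image.mpr ⟨(o, o'), Finset.mem_product.mpr ⟨ho, ho'⟩, rfl⟩)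
    set ε' := min (c / 2) (s / 3) with hε'def
    have hε' : 0 < ε' := lt_min (by positivity) (by positivity)
    obtain ⟨δ₁, hδ₁, H⟩ := hshad ε' hε'
    -- Step 4: the bridge from p to q
    obtain ⟨k₀, w, hw⟩ := htrans (ball (f p) (δ₁ / 2)) (ball q (δ₁ / 2)) isOpen_ball isOpen_ball
      ⟨f p, mem_ball_self (by positivity)⟩ ⟨q, mem_ball_self (by positivity)⟩
    obtain ⟨⟨u, hu, huw⟩, hwV⟩ := hw
    rw [mem_ball] at hu hwV
    rw [← huw] at hwV
    set L := k₀ + 1 with hLdef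
    set β : ℕ → X := fun m => if m = 0 then p else if m ≤ k₀ then (⇑f)^[m - 1] u else q
      with hβdef
    have hβ0 : β 0 = p := by simp [hβdef]
    have hβL : β L = q := by
      simp only [hβdef, hLdef]
      rw [if_neg (by omega), if_neg (by omega)]
    have hβjump : ∀ m : ℕ, m < L → dist (f (β m)) (β (m + 1)) < δ₁ := by
      intro m hm
      have hmk : m ≤ k₀ := by omega
      rcases Nat.eq_zero_or_pos m with rfl | hm1
      · rw [hβ0]
        rcases Nat.eq_zero_or_pos k₀ with hk0 | hk0
        · have hβ1 : β 1 = q := by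
            simp only [hβdef]; rw [if_neg (by omega), if_neg (by omega)]
          rw [hβ1]
          have h3 : dist (f p) q ≤ dist (f p) u + dist u q := dist_triangle _ _ _
          have h4 : dist u q < δ₁ / 2 := by
            have e : (⇑f)^[k₀] u = u := by rw [hk0]; rfl
            rwa [e] at hwV
          rw [dist_comm] at hu
          linarith
        · have hβ1 : β 1 = u := by
            simp only [hβdef]; rw [if_neg (by omega), if_pos (by omega)]; rfl
          rw [hβ1, dist_comm]
          linarith
      · have hβm : β m = (⇑f)^[m - 1] u := by
          simp only [hβdef]; rw [if_neg (by omega), if_pos hmk]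
        rcases Nat.lt_or_ge m k₀ with hltk | hgek
        · have hβm1 : β (m + 1) = (⇑f)^[m] u := by
            simp only [hβdef]; rw [if_neg (by omega), if_pos (by omega)]
            simp
          rw [hβm, hβm1]
          have e3 : m - 1 + 1 = m := by omega
          have e : f ((⇑f)^[m - 1] u) = (⇑f)^[m] u := by
            conv_rhs => rw [← e3]
            exact (Function.iterate_succ_apply' (⇑f) (m - 1) u).symm
          rw [e, dist_self]
          exact hδ₁
        · have hmek : m = k₀ := by omega
          have hβm1 : β (m + 1) = q := by
            simp only [hβdef]; rw [if_neg (by omega), if_neg (by omega)]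
          rw [hβm, hβm1]
          have e3 : m - 1 + 1 = k₀ := by omega
          have e : f ((⇑f)^[m - 1] u) = (⇑f)^[k₀] u := by
            conv_rhs => rw [← e3]
            exact (Function.iterate_succ_apply' (⇑f) (m - 1) u).symm
          rw [e]
          linarith
    -- periods
    have hπ0 : 0 < a * b := Nat.mul_pos ha0 hb0
    have hπp : (⇑f)^[a * b] p = p := by
      rw [Function.iterate_mul]
      exact Function.iterate_fixed hpa b
    have hπq : (⇑f)^[a * b] q = q := by
      rw [mul_comm a b, Function.iterate_mul]
      exact Function.iterate_fixed hqb a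
    -- the stagger times
    set T : ℕ → ℤ := fun i => (((a * b) * (L + 1) * (i + 1) : ℕ) : ℤ) with hTdef
    have hTnat : ∀ i : ℕ, L ≤ (a * b) * (L + 1) * (i + 1) := by
      intro i
      calc L ≤ L + 1 := Nat.le_succ L
        _ = 1 * (L + 1) * 1 := by ring
        _ ≤ (a * b) * (L + 1) * (i + 1) :=
            Nat.mul_le_mul (Nat.mul_le_mul (by omega) le_rfl) (by omega)
    have hTL : ∀ i : ℕ, (L : ℤ) ≤ T i := by
      intro i
      simp only [hTdef]
      exact_mod_cast hTnat i
    have hT0 : ∀ i : ℕ, 0 < T i := by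
      intro i
      have h1 : (0 : ℤ) < (L : ℤ) := by exact_mod_cast Nat.succ_pos k₀
      linarith [hTL i]
    have hTgap : ∀ i j : ℕ, i < j → T i + L ≤ T j := by
      intro i j hij
      have h1 : (a * b) * (L + 1) * (i + 1) + L ≤ (a * b) * (L + 1) * (j + 1) := by
        have h2 : (a * b) * (L + 1) * (i + 1) + (a * b) * (L + 1) ≤
            (a * b) * (L + 1) * (j + 1) := by
          rw [← Nat.mul_succ]
          exact Nat.mul_le_mul_left _ (by omega)
        have h3 : L < (a * b) * (L + 1) := by
          calc L < L + 1 := Nat.lt_succ_self L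
            _ = 1 * (L + 1) := (one_mul _).symm
            _ ≤ (a * b) * (L + 1) := Nat.mul_le_mul_right _ (by omega)
        omega
      simp only [hTdef]
      exact_mod_cast h1
    have hTdvd : ∀ i : ℕ, ((b : ℤ)) ∣ (T i - T 0) := by
      intro i
      refine ⟨(a : ℤ) * ((L : ℤ) + 1) * (i : ℤ), ?_⟩
      simp only [hTdef]
      push_cast
      ring
    -- the branching pseudo-orbits
    set Γ : ℕ → ℤ → X := fun i t =>
      if t ≤ -(T i) then hIter f (t + T i) p
      else if t < -(T i) + L then β (t + T i).toNat
      else hIter f (t + T i - L) q with hΓdef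
    have hΓmid : ∀ i : ℕ, ∀ t : ℤ, -(T i) ≤ t → t ≤ -(T i) + L →
        Γ i t = β (t + T i).toNat := by
      intro i t h1 h2
      by_cases hA : t ≤ -(T i)
      · have ht : t + T i = 0 := by omega
        simp only [hΓdef, if_pos hA, ht]
        rw [hIter_zero, Int.toNat_zero, hβ0]
      · simp only [hΓdef, if_neg hA]
        by_cases hB : t < -(T i) + L
        · rw [if_pos hB]
        · rw [if_neg hB]
          have ht : t + T i = (L : ℤ) := by omega
          rw [ht, sub_self, hIter_zero, Int.toNat_natCast, hβL]
    have hΓPO : ∀ i : ℕ, IsPseudoOrbit f δ₁ (Γ i) := by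
      intro i t
      have hL1 : (1 : ℤ) ≤ (L : ℤ) := by exact_mod_cast Nat.succ_le_of_lt (Nat.succ_pos k₀)
      rcases le_or_gt (t + 1) (-(T i)) with h | h
      · have h' : t ≤ -(T i) := by omega
        simp only [hΓdef, if_pos h', if_pos h]
        rw [f_hIter]
        have e : t + T i + 1 = t + 1 + T i := by ring
        rw [e, dist_self]
        exact hδ₁
      · rcases le_or_gt (-(T i) + L) t with h2 | h2
        · have hA : ¬ t ≤ -(T i) := by omega
          have hB : ¬ t < -(T i) + L := not_lt.mpr h2
          have hA' : ¬ t + 1 ≤ -(T i) := by omega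
          have hB' : ¬ t + 1 < -(T i) + L := by omega
          simp only [hΓdef, if_neg hA, if_neg hB, if_neg hA', if_neg hB']
          rw [f_hIter]
          have e : t + T i - L + 1 = t + 1 + T i - L := by ring
          rw [e, dist_self]
          exact hδ₁
        · have hm1 : Γ i t = β (t + T i).toNat := hΓmid i t (by omega) (by omega)
          have hm2 : Γ i (t + 1) = β ((t + T i).toNat + 1) := by
            rw [hΓmid i (t + 1) (by omega) (by omega)]
            congr 1
            omega
          rw [hm1, hm2]
          exact hβjump _ (by omega)
    have hex : ∀ i : ℕ, ∃ z : X, Shadows f ε' z (Γ i) := fun i => H (Γ i) (hΓPO i)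
    choose z hz using hex
    have hcommon : ∀ i : ℕ, ∀ m : ℕ, Γ i (m : ℤ) = Γ 0 (m : ℤ) := by
      intro i m
      have hcond : ∀ i' : ℕ, ¬ ((m : ℤ) ≤ -(T i')) ∧ ¬ ((m : ℤ) < -(T i') + L) := by
        intro i'
        constructor
        · have := hT0 i'
          omega
        · have := hTL i'
          omega
      obtain ⟨hA, hB⟩ := hcond i
      obtain ⟨hA0, hB0⟩ := hcond 0
      simp only [hΓdef, if_neg hA, if_neg hB, if_neg hA0, if_neg hB0]
      refine hIter_eq_of_dvd f hqb ?_
      have e : (m : ℤ) + T i - L - ((m : ℤ) + T 0 - L) = T i - T 0 := by ring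
      rw [e]
      exact hTdvd i
    have h2ε : 2 * ε' ≤ c := by
      have h5 : ε' ≤ c / 2 := min_le_left _ _
      linarith
    have hsub : ↑((Finset.range (n + 1)).image z) ⊆ localStable f c (z 0) := by
      intro x hx
      rw [Finset.mem_coe, Finset.mem_image] at hx
      obtain ⟨i, _, rfl⟩ := hx
      intro m
      have A := hz i (m : ℤ)
      have B := hz 0 (m : ℤ)
      rw [hIter_natCast] at A B
      rw [hcommon i m] at A
      calc dist ((⇑f)^[m] (z i)) ((⇑f)^[m] (z 0))
          ≤ dist ((⇑f)^[m] (z i)) (Γ 0 (m : ℤ)) + dist ((⇑f)^[m] (z 0)) (Γ 0 (m : ℤ)) :=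
            dist_triangle_right _ _ _
        _ ≤ c := by linarith
    have hcard := hC (z 0) _ hsub
    have hsep : ∀ i j : ℕ, i < j → z i ≠ z j := by
      intro i j hij heq
      set t : ℤ := -(T j) + L with htdef
      have hΓj : Γ j t = q := by
        rw [hΓmid j t (by omega) (by omega)]
        have e : t + T j = (L : ℤ) := by omega
        rw [e, Int.toNat_natCast, hβL]
      have hΓi : Γ i t = hIter f (t + T i) p := by
        have hA : t ≤ -(T i) := by
          have := hTgap i j hij
          omega
        simp only [hΓdef, if_pos hA]
      have hpmem : Γ i t ∈ Op := by
        rw [hΓi, hOpdef]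
        exact hIter_mem_orbit f ha0 hpa _
      have hqmem : q ∈ Oq := Finset.mem_image.mpr ⟨0, Finset.mem_range.mpr hb0, rfl⟩
      have hsge : s ≤ dist (Γ i t) q := hsle _ hpmem _ hqmem
      have hA := hz i t
      have hB := hz j t
      rw [heq] at hA
      rw [hΓj] at hB
      have htri : dist (Γ i t) q ≤ dist (hIter f t (z j)) (Γ i t) + dist (hIter f t (z j)) q :=
        dist_triangle_left _ _ _
      have hε's : ε' ≤ s / 3 := min_le_right _ _
      linarith
    have hinj : Set.InjOn z ↑(Finset.range (n + 1)) := by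
      intro i _ j _ heq
      by_contra hne
      rcases Nat.lt_or_ge i j with h | h
      · exact hsep i j h heq
      · exact hsep j i (by omega) heq.symm
    rw [Finset.card_image_of_injOn hinj, Finset.card_range] at hcard
    omega
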